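/- Let d ≥ 2, ν₀ > 0, τ₀ > 0, and let α ∈ ℝ^d satisfy the Diophantine condition |α·k| ≥ ν₀ |k|_1^{−τ₀} for all k ∈ ℤ^d∖{0}. Let τ > d + τ₀. Then the set 𝒟(τ;α) := { ω ∈ ℝ : there exists ν > 0 such that |ω(α·k) − 2πn| ≥ ν |k|_1^{−τ} for all k ∈ ℤ^d∖{0} and all n ∈ ℤ } has full Lebesgue measure in ℝ, i.e. its complement is Lebesgue-null. -/

import Mathlib

open scoped BigOperators
open MeasureTheory Filter
open scoped ENNReal

lemma aux_int_eq (a b : ℤ) (h : a.natAbs = b.natAbs) (h2 : (0 ≤ a) ↔ (0 ≤ b)) : a = b := by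
  omega

lemma card_fiber_le (e M : ℕ) :
    ((Fintype.piFinset fun _ : Fin (e+1) => Finset.Icc (-(M:ℤ)) M).filter
      (fun k => ∑ i, (k i).natAbs = M)).card ≤ 2 * (2*M+1)^e := by
  classical
  set s := ((Fintype.piFinset fun _ : Fin (e+1) => Finset.Icc (-(M:ℤ)) M).filter
      (fun k => ∑ i, (k i).natAbs = M)) with hs
  set t := (Fintype.piFinset fun _ : Fin e => Finset.Icc (-(M:ℤ)) M) ×ˢ
      (Finset.univ : Finset Bool) with ht
  have hmaps : ∀ k ∈ s, (fun k : Fin (e+1) → ℤ =>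
      ((fun i : Fin e => k i.castSucc), decide (0 ≤ k (Fin.last e)))) k ∈ t := by
    intro k hk
    simp only [hs, Finset.mem_filter, Fintype.mem_piFinset] at hk
    simp only [ht, Finset.mem_product, Fintype.mem_piFinset, Finset.mem_univ, and_true]
    intro i; exact hk.1 _
  have hinj : Set.InjOn (fun k : Fin (e+1) → ℤ =>
      ((fun i : Fin e => k i.castSucc), decide (0 ≤ k (Fin.last e)))) ↑s := by
    intro k hk k' hk' h
    simp only [hs, Finset.mem_coe, Finset.mem_filter, Fintype.mem_piFinset] at hk hk'
    simp only [Prod.mk.injEq] at h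
    obtain ⟨h1, h2⟩ := h
    have hcs : ∀ i : Fin e, k i.castSucc = k' i.castSucc := fun i => congrFun h1 i
    have hsum : ∑ i, (k i).natAbs = ∑ i, (k' i).natAbs := hk.2.trans hk'.2.symm
    rw [Fin.sum_univ_castSucc, Fin.sum_univ_castSucc] at hsum
    have hs' : ∑ i : Fin e, (k i.castSucc).natAbs = ∑ i : Fin e, (k' i.castSucc).natAbs := by
      apply Finset.sum_congr rfl; intro i _; rw [hcs i]
    have hlastabs : (k (Fin.last e)).natAbs = (k' (Fin.last e)).natAbs := by omega
    have hiff : (0 ≤ k (Fin.last e)) ↔ (0 ≤ k' (Fin.last e)) := by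
      constructor <;> intro hb <;> [skip; skip] <;>
        · by_contra hb'
          simp only [decide_eq_decide] at h2
          tauto
    have hlast : k (Fin.last e) = k' (Fin.last e) := aux_int_eq _ _ hlastabs hiff
    funext i
    exact Fin.lastCases hlast (fun j => hcs j) i
  have hle := Finset.card_le_card_of_injOn _ hmaps hinj
  have hcard : t.card = 2 * (2*M+1)^e := by
    rw [ht, Finset.card_product, Fintype.card_piFinset]
    have h1 : ∀ i : Fin e, (Finset.Icc (-(M:ℤ)) M).card = 2*M+1 := by
      intro _i; rw [Int.card_Icc]; omega
    rw [Finset.prod_congr rfl (fun i _ => h1 i), Finset.prod_const]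
    simp [Fintype.card_fin, Nat.mul_comm]
  rw [hcard] at hle
  exact hle

lemma tail_sum_ne_top (s : ℝ) (hs : s < -1) :
    ∑' (M : ℕ), ENNReal.ofReal ((M:ℝ) ^ s) ≠ ⊤ := by
  have hsum : Summable (fun M : ℕ => (M:ℝ) ^ s) := Real.summable_nat_rpow.mpr hs
  rw [← ENNReal.ofReal_tsum_of_nonneg (fun n => Real.rpow_nonneg (Nat.cast_nonneg n) s) hsum]
  exact ENNReal.ofReal_ne_top

/-- If `α ∈ ℝ^d` is Diophantine with exponent `τ₀` and `τ > d + τ₀`, then the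
set of `ω ∈ ℝ` satisfying `|ω(α·k) - 2πn| ≥ ν|k|₁^{-τ}` for some `ν > 0` and
all `k ≠ 0`, `n ∈ ℤ`, has full Lebesgue measure: its complement is null. -/
theorem full_measure_of_diophantine_omega (d : ℕ) (hd : 2 ≤ d)
    (ν₀ τ₀ τ : ℝ) (hν₀ : 0 < ν₀) (hτ₀ : 0 < τ₀) (α : Fin d → ℝ)
    (hα : ∀ k : Fin d → ℤ, k ≠ 0 →
      ν₀ * (∑ i, |(k i : ℝ)|) ^ (-τ₀) ≤ |∑ i, α i * (k i : ℝ)|)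
    (hτ : (d : ℝ) + τ₀ < τ) :
    MeasureTheory.volume {ω : ℝ | ¬ ∃ ν > (0 : ℝ), ∀ k : Fin d → ℤ, k ≠ 0 →
      ∀ n : ℤ, ν * (∑ i, |(k i : ℝ)|) ^ (-τ) ≤
        |ω * (∑ i, α i * (k i : ℝ)) - 2 * Real.pi * n|} = 0 := by
  obtain ⟨e, rfl⟩ : ∃ e, d = e + 1 := ⟨d - 1, by omega⟩
  set E : Set ℝ := {ω : ℝ | ¬ ∃ ν > (0 : ℝ), ∀ k : Fin (e+1) → ℤ, k ≠ 0 →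
      ∀ n : ℤ, ν * (∑ i, |(k i : ℝ)|) ^ (-τ) ≤
        |ω * (∑ i, α i * (k i : ℝ)) - 2 * Real.pi * n|} with hE
  -- basic notation
  set m : (Fin (e+1) → ℤ) → ℕ := fun k => ∑ i, (k i).natAbs with hm
  have hmc : ∀ k : Fin (e+1) → ℤ, (∑ i, |(k i : ℝ)|) = (m k : ℝ) := by
    intro k
    rw [hm]
    push_cast [Nat.cast_natAbs]
    rfl
  set a : (Fin (e+1) → ℤ) → ℝ := fun k => ∑ i, α i * (k i : ℝ) with haf
  have hm1 : ∀ k : Fin (e+1) → ℤ, k ≠ 0 → 1 ≤ m k := by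
    intro k hk
    rcases Nat.eq_zero_or_pos (m k) with h0 | h1
    · exfalso
      apply hk
      funext i
      have hz : (k i).natAbs = 0 :=
        Finset.sum_eq_zero_iff.mp h0 i (Finset.mem_univ i)
      simp only [Pi.zero_apply]
      omega
    · exact h1
  have hτpos : 0 < τ := by
    have he0 : (0:ℝ) ≤ (e:ℝ) := Nat.cast_nonneg e
    push_cast at hτ
    linarith
  have hs_lt : (e:ℝ) + τ₀ - τ < -1 := by
    push_cast at hτ
    linarith
  -- reduce to bounded intervals
  suffices H : ∀ R : ℕ, volume (E ∩ Set.Icc (-(R:ℝ)) R) = 0 by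
    have hcover : E ⊆ ⋃ R : ℕ, E ∩ Set.Icc (-(R:ℝ)) R := by
      intro ω hω
      obtain ⟨R, hR⟩ := exists_nat_ge |ω|
      exact Set.mem_iUnion.2 ⟨R, hω,
        ⟨by linarith [neg_abs_le ω], by linarith [le_abs_self ω]⟩⟩
    exact measure_mono_null hcover (measure_iUnion_null H)
  intro R
  set C₁ : ℝ := 4*R + 10/ν₀ with hC₁
  have hC₁pos : 0 < C₁ := by positivity
  set Z : ℝ≥0∞ := ∑' (M : ℕ), ENNReal.ofReal ((M:ℝ) ^ ((e:ℝ) + τ₀ - τ)) with hZ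
  have hZtop : Z ≠ ⊤ := tail_sum_ne_top _ hs_lt
  set K : ℝ := 2 * 3^e * C₁ with hK
  have hKpos : 0 < K := by positivity
  -- key estimate for each small ν
  have key : ∀ ν : ℝ, 0 < ν → ν ≤ 1 →
      volume (E ∩ Set.Icc (-(R:ℝ)) R) ≤ ENNReal.ofReal (K * ν) * Z := by
    intro ν hν hν1
    set S : (Fin (e+1) → ℤ) × ℤ → Set ℝ := fun p =>
      {ω | ω ∈ Set.Icc (-(R:ℝ)) R ∧ p.1 ≠ 0 ∧
        |ω * a p.1 - 2 * Real.pi * p.2| < ν * (m p.1 : ℝ) ^ (-τ)} with hS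
    have hsub : E ∩ Set.Icc (-(R:ℝ)) R ⊆ ⋃ p, S p := by
      intro ω hω
      obtain ⟨hωE, hωI⟩ := hω
      rw [hE, Set.mem_setOf_eq] at hωE
      push_neg at hωE
      obtain ⟨k, hk0, n, hn⟩ := hωE ν hν
      rw [hmc] at hn
      exact Set.mem_iUnion.2 ⟨(k, n), hωI, hk0, hn⟩
    refine le_trans (measure_mono hsub) (le_trans (measure_iUnion_le S) ?_)
    -- bound the double sum
    have hkb : ∀ k : Fin (e+1) → ℤ, ∑' (n : ℤ), volume (S (k, n)) ≤
        (if k = 0 then 0 else ENNReal.ofReal (C₁ * ν * (m k : ℝ) ^ (τ₀ - τ))) := by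
      intro k
      by_cases hk : k = 0
      · simp only [hk, if_pos]
        have : ∀ n : ℤ, S ((0 : Fin (e+1) → ℤ), n) = ∅ := by
          intro n
          rw [hS]
          ext ω
          simp
        simp only [hk] at *
        rw [show (fun n : ℤ => volume (S ((0 : Fin (e+1) → ℤ), n))) = fun _ => 0 by
          funext n; rw [this n, measure_empty]]
        simp
      · rw [if_neg hk]
        set x : ℝ := (m k : ℝ) with hx
        have hx1 : 1 ≤ x := by
          rw [hx]; exact_mod_cast hm1 k hk
        have hx0 : 0 < x := by linarith
        have ha : ν₀ * x ^ (-τ₀) ≤ |a k| := by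
          rw [hx, ← hmc]; exact hα k hk
        have hapos : 0 < |a k| := lt_of_lt_of_le (by positivity) ha
        have ha0 : a k ≠ 0 := abs_pos.mp hapos
        set r : ℝ := ν * x ^ (-τ) / |a k| with hr
        have hrpos : 0 < r := by positivity
        -- each piece is inside a ball
        have hball : ∀ n : ℤ, S (k, n) ⊆ Metric.ball ((2 * Real.pi * n) / a k) r := by
          intro n ω hω
          obtain ⟨_, _, hlt⟩ := hω
          rw [Metric.mem_ball, Real.dist_eq]
          have heq : ω - 2 * Real.pi * n / a k = (ω * a k - 2 * Real.pi * n) / a k := by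
            field_simp
          rw [heq, abs_div]
          rw [div_lt_iff₀ hapos]
          calc |ω * a k - 2 * Real.pi * ↑n| < ν * x ^ (-τ) := hlt
            _ = r * |a k| := by rw [hr]; field_simp
        have hvol : ∀ n : ℤ, volume (S (k, n)) ≤ ENNReal.ofReal (2 * r) := by
          intro n
          refine le_trans (measure_mono (hball n)) ?_
          rw [Real.volume_ball]
        -- support of n
        set N : ℤ := ⌈(R:ℝ) * |a k| + 1⌉ with hN
        have hN1 : (1:ℤ) ≤ N := by
          have h0 : (0:ℝ) ≤ (R:ℝ) * |a k| := by positivity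
          have hceil := Int.le_ceil ((R:ℝ) * |a k| + 1)
          have : (1:ℝ) ≤ (N:ℝ) := by rw [hN]; linarith
          exact_mod_cast this
        have hNle : (N:ℝ) ≤ (R:ℝ) * |a k| + 2 := by
          rw [hN]
          have := Int.ceil_lt_add_one ((R:ℝ) * |a k| + 1)
          linarith
        have hsupp : ∀ n : ℤ, n ∉ Finset.Icc (-N) N → volume (S (k, n)) = 0 := by
          intro n hn
          have : S (k, n) = ∅ := by
            rw [Set.eq_empty_iff_forall_notMem]
            intro ω hω
            obtain ⟨hωI, _, hlt⟩ := hω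
            have hxle : x ^ (-τ) ≤ 1 :=
              Real.rpow_le_one_of_one_le_of_nonpos hx1 (by linarith)
            have h1 : |ω * a k - 2 * Real.pi * n| < 1 := by
              calc |ω * a k - 2 * Real.pi * ↑n| < ν * x ^ (-τ) := hlt
                _ ≤ 1 * 1 := by
                    apply mul_le_mul hν1 hxle (by positivity) (by norm_num)
                _ = 1 := by ring
            have hωR : |ω| ≤ (R:ℝ) := by
              rw [abs_le]; exact ⟨hωI.1, hωI.2⟩
            have h2 : |(2:ℝ) * Real.pi * n| ≤ |ω * a k| + 1 := by
              have := abs_sub_abs_le_abs_sub (2 * Real.pi * (n:ℝ)) (ω * a k)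
              rw [abs_sub_comm] at this
              linarith [this, h1.le]
            have h3 : |ω * a k| ≤ (R:ℝ) * |a k| := by
              rw [abs_mul]
              exact mul_le_mul_of_nonneg_right hωR (abs_nonneg _)
            have hpi : (1:ℝ) ≤ 2 * Real.pi := by
              have := Real.pi_gt_three
              linarith
            have h4 : (|n|:ℝ) ≤ |(2:ℝ) * Real.pi * n| := by
              rw [abs_mul, abs_mul]
              have h2π : |(2:ℝ)| * |Real.pi| = 2 * Real.pi := by
                rw [abs_of_pos Real.pi_pos, abs_of_pos]; norm_num
              push_cast
              calc |(n:ℝ)| = 1 * |(n:ℝ)| := by ring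
                _ ≤ (|(2:ℝ)| * |Real.pi|) * |(n:ℝ)| := by
                    rw [h2π]
                    exact mul_le_mul_of_nonneg_right hpi (abs_nonneg _)
            have h5 : (|n|:ℝ) ≤ (R:ℝ) * |a k| + 1 := by
              push_cast at h4 ⊢
              linarith
            have h6 : (|n|:ℤ) ≤ N := by
              have : ((|n|:ℤ):ℝ) ≤ ((N:ℤ):ℝ) := by
                push_cast
                calc (|n|:ℝ) ≤ (R:ℝ) * |a k| + 1 := by push_cast at h5 ⊢; exact h5
                  _ ≤ (N:ℝ) := Int.le_ceil _
              exact_mod_cast this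
            exact hn (Finset.mem_Icc.mpr (abs_le.mp h6))
          rw [this, measure_empty]
        rw [tsum_eq_sum (s := Finset.Icc (-N) N) hsupp]
        refine le_trans (Finset.sum_le_card_nsmul _ _ _ (fun n _ => hvol n)) ?_
        rw [Int.card_Icc]
        have hcardeq : (N + 1 - -N).toNat = (2*N+1).toNat := by omega
        rw [hcardeq]
        rw [nsmul_eq_mul]
        have hcast : (((2*N+1).toNat : ℕ) : ℝ≥0∞) = ENNReal.ofReal (((2*N+1).toNat : ℕ) : ℝ) := by
          rw [ENNReal.ofReal_natCast]
        rw [hcast, ← ENNReal.ofReal_mul (by positivity)]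
        apply ENNReal.ofReal_le_ofReal
        -- the real inequality
        have hcr : (((2*N+1).toNat : ℕ) : ℝ) ≤ 2 * ((R:ℝ) * |a k|) + 5 := by
          have h1 : ((2*N+1).toNat : ℤ) = 2*N+1 := Int.toNat_of_nonneg (by omega)
          have : (((2*N+1).toNat : ℕ) : ℝ) = 2*(N:ℝ)+1 := by
            exact_mod_cast congrArg (fun z : ℤ => (z:ℝ)) h1
          rw [this]
          linarith
        have hP : (0:ℝ) < x ^ (-τ) := Real.rpow_pos_of_pos hx0 _
        have hQ : (0:ℝ) < x ^ (τ₀ - τ) := Real.rpow_pos_of_pos hx0 _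
        have h1' : x ^ (-τ) ≤ x ^ (τ₀ - τ) :=
          Real.rpow_le_rpow_of_exponent_le hx1 (by linarith)
        have h2' : x ^ (-τ) / |a k| ≤ x ^ (τ₀ - τ) / ν₀ := by
          rw [div_le_div_iff₀ hapos hν₀]
          have hxx : x ^ (-τ₀) * x ^ (τ₀ - τ) = x ^ (-τ) := by
            rw [← Real.rpow_add hx0]; congr 1; ring
          calc x ^ (-τ) * ν₀ = (ν₀ * x ^ (-τ₀)) * x ^ (τ₀ - τ) := by
                rw [mul_assoc, hxx]; ring
            _ ≤ |a k| * x ^ (τ₀ - τ) := mul_le_mul_of_nonneg_right ha hQ.le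
            _ = x ^ (τ₀ - τ) * |a k| := by ring
        calc (((2*N+1).toNat : ℕ) : ℝ) * (2 * r)
            ≤ (2 * ((R:ℝ) * |a k|) + 5) * (2 * r) := by
              apply mul_le_mul_of_nonneg_right hcr (by positivity)
          _ = 4 * R * (ν * x ^ (-τ)) + 10 * ν * (x ^ (-τ) / |a k|) := by
              have hane : |a k| ≠ 0 := ne_of_gt hapos
              rw [hr]
              field_simp
              ring
          _ ≤ 4 * R * (ν * x ^ (τ₀ - τ)) + 10 * ν * (x ^ (τ₀ - τ) / ν₀) := by
              apply add_le_add
              · apply mul_le_mul_of_nonneg_left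
                  (mul_le_mul_of_nonneg_left h1' hν.le) (by positivity)
              · exact mul_le_mul_of_nonneg_left h2' (by positivity)
          _ = C₁ * ν * x ^ (τ₀ - τ) := by
              rw [hC₁]; field_simp
    -- sum over k, grouped by m k
    set h : (Fin (e+1) → ℤ) → ℝ≥0∞ := fun k =>
      if k = 0 then 0 else ENNReal.ofReal (C₁ * ν * (m k : ℝ) ^ (τ₀ - τ)) with hh
    have hsum1 : ∑' (p : (Fin (e+1) → ℤ) × ℤ), volume (S p) ≤ ∑' k, h k := by
      rw [ENNReal.tsum_prod']
      exact ENNReal.tsum_le_tsum hkb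
    refine le_trans hsum1 ?_
    -- group by fibers of m
    have hfib : ∑' k, h k = ∑' (M : ℕ), ∑' (kk : {k // m k = M}), h kk := by
      rw [← (Equiv.sigmaFiberEquiv m).tsum_eq h]
      rw [ENNReal.tsum_sigma']
      rfl
    rw [hfib]
    have hfibM : ∀ M : ℕ, ∑' (kk : {k // m k = M}), h kk ≤
        ENNReal.ofReal (K * ν) * ENNReal.ofReal ((M:ℝ) ^ ((e:ℝ) + τ₀ - τ)) := by
      intro M
      by_cases hM : M = 0
      · subst hM
        have hallzero : ∀ kk : {k // m k = 0}, h kk = 0 := by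
          rintro ⟨k, hk⟩
          have : k = 0 := by
            by_contra hk0
            have := hm1 k hk0
            omega
          simp [hh, this]
        rw [tsum_congr hallzero]
        simp
      · have hM1 : 1 ≤ M := by omega
        set F : Finset (Fin (e+1) → ℤ) :=
          (Fintype.piFinset fun _ : Fin (e+1) => Finset.Icc (-(M:ℤ)) M).filter
            (fun k => ∑ i, (k i).natAbs = M) with hF
        have hsetF : {k : Fin (e+1) → ℤ | m k = M} = ↑F := by
          ext k
          simp only [hF, Set.mem_setOf_eq, Finset.coe_filter, Fintype.mem_piFinset,
            Finset.mem_Icc]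
          constructor
          · intro hk
            refine ⟨fun i => ?_, hk⟩
            have hle0 : (k i).natAbs ≤ m k :=
              Finset.single_le_sum (f := fun j => (k j).natAbs)
                (fun j _ => Nat.zero_le _) (Finset.mem_univ i)
            have hle : (k i).natAbs ≤ M := by rw [← hk]; exact hle0
            omega
          · exact fun hk => hk.2
        have hiff' : ∀ k : Fin (e+1) → ℤ, m k = M ↔ k ∈ F := by
          intro k
          have := Set.ext_iff.mp hsetF k
          simpa using this
        have heqsub : ∑' (kk : {k // m k = M}), h kk = ∑ k ∈ F, h k :=
          (Equiv.tsum_eq (Equiv.subtypeEquivRight hiff').symm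
            (fun kk : {k // m k = M} => h ↑kk)).symm.trans (Finset.tsum_subtype F h)
        rw [heqsub]
        have hbound : ∀ k ∈ F, h k ≤ ENNReal.ofReal (C₁ * ν * (M:ℝ) ^ (τ₀ - τ)) := by
          intro k hk
          simp only [hF, Finset.mem_filter] at hk
          have hmk : m k = M := hk.2
          simp only [hh]
          by_cases hk0 : k = 0
          · rw [if_pos hk0]; exact zero_le
          · rw [if_neg hk0, hmk]
        refine le_trans (Finset.sum_le_card_nsmul _ _ _ hbound) ?_
        have hcardle : F.card ≤ 2 * (2*M+1)^e := card_fiber_le e M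
        rw [nsmul_eq_mul]
        have hcast1 : (F.card : ℝ≥0∞) * ENNReal.ofReal (C₁ * ν * (M:ℝ) ^ (τ₀ - τ)) =
            ENNReal.ofReal ((F.card : ℝ) * (C₁ * ν * (M:ℝ) ^ (τ₀ - τ))) := by
          rw [ENNReal.ofReal_mul (Nat.cast_nonneg _), ENNReal.ofReal_natCast]
        rw [hcast1]
        calc ENNReal.ofReal ((F.card : ℝ) * (C₁ * ν * (M:ℝ) ^ (τ₀ - τ)))
            ≤ ENNReal.ofReal (((2 * (2*M+1)^e : ℕ) : ℝ) * (C₁ * ν * (M:ℝ) ^ (τ₀ - τ))) := by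
              apply ENNReal.ofReal_le_ofReal
              apply mul_le_mul_of_nonneg_right _ (by positivity)
              exact_mod_cast hcardle
          _ ≤ ENNReal.ofReal ((K * ν) * ((M:ℝ) ^ ((e:ℝ) + τ₀ - τ))) := by
              apply ENNReal.ofReal_le_ofReal
              have hMR : (1:ℝ) ≤ (M:ℝ) := by exact_mod_cast hM1
              have hM0 : (0:ℝ) < (M:ℝ) := by linarith
              have hp1 : ((2*M+1:ℕ):ℝ)^e ≤ (3*(M:ℝ))^e := by
                apply pow_le_pow_left₀ (by positivity)
                push_cast; linarith
              have hp2 : (3*(M:ℝ))^e = 3^e * (M:ℝ)^(e:ℕ) := by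
                rw [mul_pow]
              have hp3 : (M:ℝ)^(e:ℕ) * (M:ℝ)^(τ₀ - τ) = (M:ℝ)^((e:ℝ) + τ₀ - τ) := by
                rw [← Real.rpow_natCast (M:ℝ) e, ← Real.rpow_add hM0]
                congr 1; ring
              have hQ : (0:ℝ) ≤ (M:ℝ) ^ (τ₀ - τ) := Real.rpow_nonneg hM0.le _
              calc ((2 * (2*M+1)^e : ℕ) : ℝ) * (C₁ * ν * (M:ℝ) ^ (τ₀ - τ))
                  = 2 * ((2*M+1:ℕ):ℝ)^e * (C₁ * ν * (M:ℝ) ^ (τ₀ - τ)) := by push_cast; ring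
                _ ≤ 2 * (3^e * (M:ℝ)^(e:ℕ)) * (C₁ * ν * (M:ℝ) ^ (τ₀ - τ)) := by
                    rw [← hp2]
                    apply mul_le_mul_of_nonneg_right _ (by positivity)
                    apply mul_le_mul_of_nonneg_left hp1 (by norm_num)
                _ = (K * ν) * ((M:ℝ)^(e:ℕ) * (M:ℝ)^(τ₀ - τ)) := by rw [hK]; ring
                _ = (K * ν) * ((M:ℝ) ^ ((e:ℝ) + τ₀ - τ)) := by rw [hp3]
          _ = ENNReal.ofReal (K * ν) * ENNReal.ofReal ((M:ℝ) ^ ((e:ℝ) + τ₀ - τ)) := by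
              rw [ENNReal.ofReal_mul (by positivity)]
    refine le_trans (ENNReal.tsum_le_tsum hfibM) ?_
    rw [ENNReal.tsum_mul_left]
  -- conclude via ν → 0
  have hlim : Tendsto (fun j : ℕ => ENNReal.ofReal (K * (1/(j+1:ℝ))) * Z) atTop (nhds 0) := by
    have h1 : Tendsto (fun j : ℕ => K * (1/(j+1:ℝ))) atTop (nhds 0) := by
      have := tendsto_one_div_add_atTop_nhds_zero_nat (𝕜 := ℝ)
      have h2 := this.const_mul K
      simpa using h2
    have h3 : Tendsto (fun j : ℕ => ENNReal.ofReal (K * (1/(j+1:ℝ)))) atTop (nhds 0) := by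
      have := (ENNReal.continuous_ofReal.tendsto 0).comp h1
      simpa [Function.comp_def] using this
    have := ENNReal.Tendsto.mul_const h3 (Or.inr hZtop)
    simpa using this
  have hub : ∀ j : ℕ, volume (E ∩ Set.Icc (-(R:ℝ)) R) ≤
      ENNReal.ofReal (K * (1/(j+1:ℝ))) * Z := by
    intro j
    apply key
    · positivity
    · rw [div_le_one (by positivity)]
      linarith [Nat.cast_nonneg (α := ℝ) j]
  have hfinal : volume (E ∩ Set.Icc (-(R:ℝ)) R) ≤ 0 :=
    le_of_tendsto_of_tendsto'
      (tendsto_const_nhds (x := volume (E ∩ Set.Icc (-(R:ℝ)) R)) (f := atTop (α := ℕ)))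
      hlim hub
  exact le_antisymm hfinal zero_le
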